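/- For every integer n ≥ 0, the sum from j = 0 to n of (U_j(cos(π/(n+2))))² equals (n+2)/(2·sin²(π/(n+2))). -/

import Mathlib

open Polynomial Polynomial.Chebyshev

lemma sum_cos_zero (n : ℕ) :
    ∑ j ∈ Finset.range (n + 2), Real.cos (2 * Real.pi / (n + 2) * j) = 0 := by
  have hn2 : (0:ℝ) < (n:ℝ) + 2 := by positivity
  set a : ℝ := 2 * Real.pi / (n + 2) with ha
  have hapos : 0 < a := by positivity
  have halt : a < 2 * Real.pi := by
    rw [ha, div_lt_iff₀ hn2]
    nlinarith [Real.pi_pos]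
  set z : ℂ := Complex.exp (a * Complex.I) with hz
  have hz1 : z ≠ 1 := by
    intro h
    have : Real.cos a = 1 := by
      have := congrArg Complex.re h
      simpa [hz, Complex.exp_ofReal_mul_I_re] using this
    rw [Real.cos_eq_one_iff_of_lt_of_lt (by linarith) halt] at this
    linarith
  have hzn : z ^ (n + 2) = 1 := by
    rw [hz, ← Complex.exp_nat_mul]
    have h1 : ((n + 2 : ℕ) : ℝ) * a = 2 * Real.pi := by
      push_cast
      rw [ha]
      field_simp
    have h2 : ((n + 2 : ℕ) : ℂ) * ((a : ℝ) * Complex.I) = 2 * Real.pi * Complex.I := by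
      rw [← mul_assoc]
      norm_cast
      rw [h1]
    rw [h2, Complex.exp_two_pi_mul_I]
  have hgeom : ∑ j ∈ Finset.range (n + 2), z ^ j = 0 := by
    rw [geom_sum_eq hz1, hzn]
    simp
  have := congrArg Complex.re hgeom
  rw [Complex.re_sum] at this
  convert this using 2 with j hj
  rw [hz, ← Complex.exp_nat_mul]
  rw [show (j:ℂ) * ((a:ℝ) * Complex.I) = ((a * j : ℝ) : ℂ) * Complex.I by push_cast; ring]
  rw [Complex.exp_ofReal_mul_I_re]
  exact Complex.zero_re.symm

theorem stmt_10 (n : ℕ) :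
    ∑ j ∈ Finset.range (n + 1), ((U ℝ (j : ℤ)).eval (Real.cos (Real.pi / (n + 2)))) ^ 2 =
      ((n : ℝ) + 2) / (2 * Real.sin (Real.pi / (n + 2)) ^ 2) := by
  have hn2 : (0:ℝ) < (n:ℝ) + 2 := by positivity
  set θ : ℝ := Real.pi / (n + 2) with hθ
  have hθpos : 0 < θ := by positivity
  have hθlt : θ < Real.pi := by
    rw [hθ, div_lt_iff₀ hn2]
    nlinarith [Real.pi_pos]
  have hs : 0 < Real.sin θ := Real.sin_pos_of_pos_of_lt_pi hθpos hθlt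
  have hs2 : Real.sin θ ^ 2 ≠ 0 := by positivity
  -- rewrite each term
  have hterm : ∀ j : ℕ, ((U ℝ (j : ℤ)).eval (Real.cos θ)) ^ 2
      = Real.sin ((j + 1) * θ) ^ 2 / Real.sin θ ^ 2 := by
    intro j
    have h := U_real_cos θ (j : ℤ)
    push_cast at h
    have heq : (U ℝ (j:ℤ)).eval (Real.cos θ) = Real.sin (((j:ℝ) + 1) * θ) / Real.sin θ := by
      rw [eq_div_iff hs.ne', h]
    rw [heq, div_pow]
  rw [Finset.sum_congr rfl fun j _ => hterm j, ← Finset.sum_div]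
  -- key sum
  have key : ∑ j ∈ Finset.range (n + 1), Real.sin (((j:ℝ) + 1) * θ) ^ 2 = ((n:ℝ) + 2) / 2 := by
    have hcos : ∀ j : ℕ, Real.sin (((j:ℝ) + 1) * θ) ^ 2
        = 1 / 2 - Real.cos (2 * Real.pi / (n + 2) * ((j:ℝ) + 1)) / 2 := by
      intro j
      have h2 := Real.cos_sq (((j:ℝ)+1)*θ)
      have h3 : Real.sin (((j:ℝ)+1)*θ) ^ 2 = 1 - Real.cos (((j:ℝ)+1)*θ)^2 := by
        have := Real.sin_sq_add_cos_sq (((j:ℝ)+1)*θ)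
        linarith
      rw [h3, h2]
      have h4 : 2 * (((j:ℝ)+1) * θ) = 2 * Real.pi / (n + 2) * ((j:ℝ) + 1) := by
        rw [hθ]; field_simp
      rw [h4]; ring
    rw [Finset.sum_congr rfl fun j _ => hcos j, Finset.sum_sub_distrib]
    have h0 := sum_cos_zero n
    rw [Finset.sum_range_succ'] at h0
    push_cast at h0
    simp only [mul_zero, Real.cos_zero] at h0
    have h1 : ∑ j ∈ Finset.range (n + 1), Real.cos (2 * Real.pi / (n + 2) * ((j:ℝ) + 1)) = -1 := by
      linarith
    have h2 : ∑ j ∈ Finset.range (n + 1),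
        Real.cos (2 * Real.pi / (n + 2) * ((j:ℝ) + 1)) / 2 = -1 / 2 := by
      rw [← Finset.sum_div, h1]
    have h3 : ∑ _j ∈ Finset.range (n + 1), (1:ℝ) / 2 = ((n:ℝ) + 1) / 2 := by
      rw [Finset.sum_const, Finset.card_range, nsmul_eq_mul]
      push_cast
      ring
    rw [h2, h3]
    ring
  rw [key, div_div]
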